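/- arXiv:1307.2975 — 5 statements merged into one kernel-verified Lean document; each statement's English description precedes it below -/
import Mathlib

section
/- Let n ≥ 1, let z₁,…,z_n ∈ ℂ be distinct with Im z_k > 0 for each k, and let r₁,…,r_n, s₁,…,s_n ∈ ℂ² satisfy the linear system (L1). Define, for z ∈ ℂ with z ∉ {z₁,…,z_n, conj(z₁),…,conj(z_n)}, the matrices χ(z) := I + Σ_{k=1}^n i (r_k ⊗ conj(s_k))/(z − z_k) and χ⁺(z) := I − Σ_{k=1}^n i (s_k ⊗ conj(r_k))/(z − conj(z_k)). Then χ(z) χ⁺(z) = I for every such z. -/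
open MeasureTheory Matrix ENNReal Filter

noncomputable section

/-- The Pauli matrix `σ₃ = diag(1, -1)`. -/
def sigma3 : Matrix (Fin 2) (Fin 2) ℂ := !![1, 0; 0, -1]

/-- `Q(w)` : the off-diagonal matrix with `(1,2)`-entry `w` and `(2,1)`-entry `-conj w`. -/
def Qm (w : ℂ) : Matrix (Fin 2) (Fin 2) ℂ := !![0, w; -(starRingEnd ℂ w), 0]

/-- The Hermitian inner product `⟨u,v⟩ = conj u₁ * v₁ + conj u₂ * v₂` on `ℂ²`. -/
def inn (u v : Fin 2 → ℂ) : ℂ := starRingEnd ℂ (u 0) * v 0 + starRingEnd ℂ (u 1) * v 1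

/-- The outer product `u ⊗ conj v`. -/
def outer (u v : Fin 2 → ℂ) : Matrix (Fin 2) (Fin 2) ℂ :=
  Matrix.of fun a b => u a * starRingEnd ℂ (v b)

/-- The Gramian matrix `M_{k,j} = -i ⟨s_j, s_k⟩ / (conj z_k - z_j)`. -/
def gram {n : ℕ} (z : Fin n → ℂ) (s : Fin n → Fin 2 → ℂ) : Matrix (Fin n) (Fin n) ℂ :=
  Matrix.of fun k j => -Complex.I * inn (s j) (s k) / (starRingEnd ℂ (z k) - z j)

/-- The `(j,k)`-cofactor `D_{j,k}` of a square matrix. -/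
def cof {n : ℕ} (A : Matrix (Fin n) (Fin n) ℂ) (j k : Fin n) : ℂ := A.adjugate k j

/-- The linear system (L1): `i s_k = ∑_j (⟨s_j,s_k⟩/(conj z_k - z_j)) r_j`. -/
def L1sys {n : ℕ} (z : Fin n → ℂ) (s r : Fin n → Fin 2 → ℂ) : Prop :=
  ∀ k, Complex.I • s k = ∑ j, (inn (s j) (s k) / (starRingEnd ℂ (z k) - z j)) • r j

/-- The linear system (L2): `i r_k = ∑_j (⟨r_j,r_k⟩/(conj z_j - z_k)) s_j`. -/
def L2sys {n : ℕ} (z : Fin n → ℂ) (s r : Fin n → Fin 2 → ℂ) : Prop :=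
  ∀ k, Complex.I • r k = ∑ j, (inn (r j) (r k) / (starRingEnd ℂ (z j) - z k)) • s j

/-- A classical solution of the cubic NLS equation `i q_t + q_xx + 2 |q|² q = 0`;
functions of `(x, t)` are encoded as `q : ℝ → ℝ → ℂ`, `x` first. -/
def IsClassicalNLS (q : ℝ → ℝ → ℂ) : Prop :=
  (∀ t, ContDiff ℝ 2 fun x => q x t) ∧ (∀ x, ContDiff ℝ 1 fun t => q x t) ∧
    ∀ x t, Complex.I * deriv (fun τ => q x τ) t + deriv (deriv fun y => q y t) x
      + 2 * (‖q x t‖ : ℂ) ^ 2 * q x t = 0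

/-- The `x`-part Lax matrix `U = -i z σ₃ + Q(w)`. -/
def Ux (z w : ℂ) : Matrix (Fin 2) (Fin 2) ℂ := (-(Complex.I * z)) • sigma3 + Qm w

/-- The `t`-part Lax matrix `V = i(|w|² - 2z²) σ₃ + 2 z Q(w) - i Q(w_x) σ₃`. -/
def Vt (z w wx : ℂ) : Matrix (Fin 2) (Fin 2) ℂ :=
  (Complex.I * ((‖w‖ : ℂ) ^ 2 - 2 * z ^ 2)) • sigma3 + (2 * z) • Qm w
    - Complex.I • (Qm wx * sigma3)

/-- The dressed potential `q = q₀ - (2/D) ∑_{k,j} D_{j,k} s_{j,1} conj (s_{k,2})` (pointwise). -/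
def dressQ {n : ℕ} (z : Fin n → ℂ) (q0 : ℂ) (s : Fin n → Fin 2 → ℂ) : ℂ :=
  q0 - 2 / (gram z s).det *
    ∑ k, ∑ j, cof (gram z s) j k * s j 0 * starRingEnd ℂ (s k 1)

/-- `Σ^S` of the 2-soliton, as a function of the phases `φ₁, φ₂, ψ₁, ψ₂`. -/
def SigmaSof (η₁ η₂ ξ₁ ξ₂ φ₁ φ₂ ψ₁ ψ₂ : ℝ) : ℂ :=
  (Complex.exp (-2*(η₂:ℂ)*(φ₂:ℂ) + 2*Complex.I*(ψ₁:ℂ)) +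
      Complex.exp (2*(η₂:ℂ)*(φ₂:ℂ) + 2*Complex.I*(ψ₁:ℂ))) / (2*(η₂:ℂ))
  + (Complex.exp (-2*(η₁:ℂ)*(φ₁:ℂ) + 2*Complex.I*(ψ₂:ℂ)) +
      Complex.exp (2*(η₁:ℂ)*(φ₁:ℂ) + 2*Complex.I*(ψ₂:ℂ))) / (2*(η₁:ℂ))
  - (Complex.exp (-2*(η₂:ℂ)*(φ₂:ℂ) + 2*Complex.I*(ψ₁:ℂ)) +
      Complex.exp (2*(η₁:ℂ)*(φ₁:ℂ) + 2*Complex.I*(ψ₂:ℂ))) /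
        ((η₁:ℂ) + (η₂:ℂ) + Complex.I*((ξ₁:ℂ) - (ξ₂:ℂ)))
  - (Complex.exp (-2*(η₁:ℂ)*(φ₁:ℂ) + 2*Complex.I*(ψ₂:ℂ)) +
      Complex.exp (2*(η₂:ℂ)*(φ₂:ℂ) + 2*Complex.I*(ψ₁:ℂ))) /
        ((η₁:ℂ) + (η₂:ℂ) - Complex.I*((ξ₁:ℂ) - (ξ₂:ℂ)))

/-- `D^S` of the 2-soliton, as a function of the phases `φ₁, φ₂, ψ₁, ψ₂`. -/
def DSof (η₁ η₂ ξ₁ ξ₂ φ₁ φ₂ ψ₁ ψ₂ : ℝ) : ℂ :=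
  (Complex.exp (-2*(η₁:ℂ)*(φ₁:ℂ)) + Complex.exp (2*(η₁:ℂ)*(φ₁:ℂ))) *
      (Complex.exp (-2*(η₂:ℂ)*(φ₂:ℂ)) + Complex.exp (2*(η₂:ℂ)*(φ₂:ℂ))) / (4*(η₁:ℂ)*(η₂:ℂ))
  - (Complex.exp (-(η₁:ℂ)*(φ₁:ℂ) - (η₂:ℂ)*(φ₂:ℂ) + Complex.I*((ψ₁:ℂ) - (ψ₂:ℂ))) +
      Complex.exp ((η₁:ℂ)*(φ₁:ℂ) + (η₂:ℂ)*(φ₂:ℂ) - Complex.I*((ψ₁:ℂ) - (ψ₂:ℂ)))) *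
    (Complex.exp (-(η₁:ℂ)*(φ₁:ℂ) - (η₂:ℂ)*(φ₂:ℂ) - Complex.I*((ψ₁:ℂ) - (ψ₂:ℂ))) +
      Complex.exp ((η₁:ℂ)*(φ₁:ℂ) + (η₂:ℂ)*(φ₂:ℂ) + Complex.I*((ψ₁:ℂ) - (ψ₂:ℂ)))) /
    (((η₁:ℂ) + (η₂:ℂ))^2 + ((ξ₁:ℂ) - (ξ₂:ℂ))^2)

/-- The phase `φ = x + 4 ξ t - x_c`. -/
def phiSol (ξ xc x t : ℝ) : ℝ := x + 4*ξ*t - xc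

/-- The phase `ψ = θ - ξ (x + 2 ξ t - x_c) + 2 η² t`. -/
def psiSol (θ ξ xc η x t : ℝ) : ℝ := θ - ξ*(x + 2*ξ*t - xc) + 2*η^2*t

/-- `D^S(x,t)` for the 2-soliton with parameters `η₁, η₂, ξ₁, ξ₂, x₁, x₂, θ₁, θ₂`. -/
def twoSolitonD (η₁ η₂ ξ₁ ξ₂ x₁ x₂ θ₁ θ₂ x t : ℝ) : ℂ :=
  DSof η₁ η₂ ξ₁ ξ₂ (phiSol ξ₁ x₁ x t) (phiSol ξ₂ x₂ x t)
    (psiSol θ₁ ξ₁ x₁ η₁ x t) (psiSol θ₂ ξ₂ x₂ η₂ x t)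

/-- `Σ^S(x,t)` for the 2-soliton. -/
def twoSolitonSigma (η₁ η₂ ξ₁ ξ₂ x₁ x₂ θ₁ θ₂ x t : ℝ) : ℂ :=
  SigmaSof η₁ η₂ ξ₁ ξ₂ (phiSol ξ₁ x₁ x t) (phiSol ξ₂ x₂ x t)
    (psiSol θ₁ ξ₁ x₁ η₁ x t) (psiSol θ₂ ξ₂ x₂ η₂ x t)

/-- The 2-soliton `q^S = 2 Σ^S / D^S`. -/
def twoSoliton (η₁ η₂ ξ₁ ξ₂ x₁ x₂ θ₁ θ₂ x t : ℝ) : ℂ :=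
  2 * twoSolitonSigma η₁ η₂ ξ₁ ξ₂ x₁ x₂ θ₁ θ₂ x t / twoSolitonD η₁ η₂ ξ₁ ξ₂ x₁ x₂ θ₁ θ₂ x t

/-- The separable (Jost-type) form
`s = e^{-i conj z (x - x_j) - 2 i conj z² t + i θ_j} f - e^{i conj z (x - x_j) + 2 i conj z² t - i θ_j} g`. -/
def jost (zj : ℂ) (xj θj : ℝ) (f g : ℝ → ℝ → Fin 2 → ℂ) (x t : ℝ) : Fin 2 → ℂ :=
  Complex.exp (-(Complex.I) * starRingEnd ℂ zj * ((x:ℂ) - (xj:ℂ))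
      - 2*Complex.I*(starRingEnd ℂ zj)^2*(t:ℂ) + Complex.I*(θj:ℂ)) • f x t
  - Complex.exp (Complex.I * starRingEnd ℂ zj * ((x:ℂ) - (xj:ℂ))
      + 2*Complex.I*(starRingEnd ℂ zj)^2*(t:ℂ) - Complex.I*(θj:ℂ)) • g x t

/-- The pair of eigenvalues `z_j = ξ_j + i η_j`, `j = 1, 2`. -/
def zvec (ξ₁ η₁ ξ₂ η₂ : ℝ) : Fin 2 → ℂ :=
  ![(ξ₁:ℂ) + (η₁:ℂ)*Complex.I, (ξ₂:ℂ) + (η₂:ℂ)*Complex.I]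

/-- The two vector functions `s₁, s₂` in separable form. -/
def sJ (ξ₁ η₁ ξ₂ η₂ x₁ x₂ θ₁ θ₂ : ℝ) (f g : Fin 2 → ℝ → ℝ → Fin 2 → ℂ) (j : Fin 2)
    (x t : ℝ) : Fin 2 → ℂ :=
  jost (zvec ξ₁ η₁ ξ₂ η₂ j) (![x₁, x₂] j) (![θ₁, θ₂] j) (f j) (g j) x t

/-- The explicit vector solutions used to build the `n`-soliton from `q₀ = 0`. -/
def solS {n : ℕ} (z : Fin n → ℂ) (xs θ : Fin n → ℝ) (j : Fin n) (x t : ℝ) : Fin 2 → ℂ :=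
  ![Complex.exp (-(Complex.I) * starRingEnd ℂ (z j) * ((x:ℂ) - ((xs j : ℝ):ℂ))
      - 2*Complex.I*(starRingEnd ℂ (z j))^2*(t:ℂ) + Complex.I*((θ j : ℝ):ℂ)),
    -Complex.exp (Complex.I * starRingEnd ℂ (z j) * ((x:ℂ) - ((xs j : ℝ):ℂ))
      + 2*Complex.I*(starRingEnd ℂ (z j))^2*(t:ℂ) - Complex.I*((θ j : ℝ):ℂ))]

/-- The `n`-soliton with parameters `{ξ_j, η_j, x_j, θ_j}`. -/
def nSoliton {n : ℕ} (ξ η xs θ : Fin n → ℝ) (x t : ℝ) : ℂ :=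
  dressQ (fun j => (ξ j : ℂ) + (η j : ℂ)*Complex.I) 0
    (fun j => solS (fun j => (ξ j : ℂ) + (η j : ℂ)*Complex.I) xs θ j x t)


lemma inn_conj (u v : Fin 2 → ℂ) : starRingEnd ℂ (inn u v) = inn v u := by
  simp [inn]; ring

lemma outer_mul_outer (u v a b : Fin 2 → ℂ) :
    outer u v * outer a b = inn v a • outer u b := by
  ext i j
  simp [outer, inn, Matrix.mul_apply, Fin.sum_univ_two]
  ring

lemma outer_smul_right (c : ℂ) (u v : Fin 2 → ℂ) :
    outer u (c • v) = (starRingEnd ℂ c) • outer u v := by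
  ext i j; simp [outer]; ring

lemma outer_smul_left (c : ℂ) (u v : Fin 2 → ℂ) :
    outer (c • u) v = c • outer u v := by
  ext i j; simp [outer]; ring

lemma outer_sum_right {n : ℕ} (u : Fin 2 → ℂ) (f : Fin n → Fin 2 → ℂ) :
    outer u (∑ k, f k) = ∑ k, outer u (f k) := by
  ext i j
  simp [outer, Matrix.sum_apply, map_sum, Finset.mul_sum]

lemma outer_sum_left {n : ℕ} (v : Fin 2 → ℂ) (f : Fin n → Fin 2 → ℂ) :
    outer (∑ k, f k) v = ∑ k, outer (f k) v := by
  ext i j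
  simp [outer, Matrix.sum_apply, Finset.sum_mul]

/-- `χ(z) χ⁺(z) = I` for the dressing factors, given the linear system (L1). -/
theorem stmt_1 (n : ℕ) (hn : 1 ≤ n) (z : Fin n → ℂ) (hz : Function.Injective z)
    (him : ∀ k, 0 < (z k).im) (r s : Fin n → Fin 2 → ℂ)
    (hL1 : L1sys z s r) (w : ℂ)
    (hw : ∀ k, w ≠ z k ∧ w ≠ starRingEnd ℂ (z k)) :
    (1 + ∑ k, (Complex.I / (w - z k)) • outer (r k) (s k)) *
      (1 - ∑ k, (Complex.I / (w - starRingEnd ℂ (z k))) • outer (s k) (r k)) = 1 := by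
  -- abbreviations
  have hconj : ∀ k l : Fin n, z k - starRingEnd ℂ (z l) ≠ 0 := by
    intro k l h
    have h2 := congrArg Complex.im h
    simp [Complex.sub_im, Complex.conj_im] at h2
    have := him k; have := him l; linarith
  have hwz : ∀ k, w - z k ≠ 0 := fun k => sub_ne_zero.mpr (hw k).1
  have hwzc : ∀ k, w - starRingEnd ℂ (z k) ≠ 0 := fun k => sub_ne_zero.mpr (hw k).2
  set A : Matrix (Fin 2) (Fin 2) ℂ :=
    ∑ k, (Complex.I / (w - z k)) • outer (r k) (s k) with hA
  set B : Matrix (Fin 2) (Fin 2) ℂ :=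
    ∑ k, (Complex.I / (w - starRingEnd ℂ (z k))) • outer (s k) (r k) with hB
  -- consequence of L1: s k = ∑ j (-I * ⟨s j, s k⟩ / (z̄ k - z j)) • r j
  have hsum : ∀ k, (∑ j, (-Complex.I * (inn (s j) (s k) / (starRingEnd ℂ (z k) - z j))) • r j)
      = s k := by
    intro k
    have h := hL1 k
    calc ∑ j, (-Complex.I * (inn (s j) (s k) / (starRingEnd ℂ (z k) - z j))) • r j
        = (-Complex.I) • ∑ j, (inn (s j) (s k) / (starRingEnd ℂ (z k) - z j)) • r j := by
          rw [Finset.smul_sum]; exact Finset.sum_congr rfl fun j _ => (smul_smul _ _ _).symm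
      _ = (-Complex.I) • (Complex.I • s k) := by rw [← h]
      _ = s k := by rw [smul_smul]; simp
  have key1 : ∀ k, (∑ l, (Complex.I * inn (s k) (s l) / (z k - starRingEnd ℂ (z l)))
      • outer (r k) (r l)) = outer (r k) (s k) := by
    intro k
    conv_rhs => rw [← hsum k]
    rw [outer_sum_right]
    refine Finset.sum_congr rfl fun l _ => ?_
    rw [outer_smul_right]
    congr 1
    simp only [_root_.map_mul, map_neg, map_div₀, Complex.conj_I, inn_conj, map_sub,
      Complex.conj_conj]
    ring
  have key2 : ∀ l, (∑ k, (Complex.I * inn (s k) (s l) / (z k - starRingEnd ℂ (z l)))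
      • outer (r k) (r l)) = outer (s l) (r l) := by
    intro l
    conv_rhs => rw [← hsum l]
    rw [outer_sum_left]
    refine Finset.sum_congr rfl fun k _ => ?_
    rw [outer_smul_left]
    congr 1
    rw [show starRingEnd ℂ (z l) - z k = -(z k - starRingEnd ℂ (z l)) by ring, div_neg]
    ring
  have hAB : A * B = A - B := by
    have step1 : A * B = ∑ k, ∑ l, ((Complex.I / (w - z k)) *
        (Complex.I / (w - starRingEnd ℂ (z l))) * inn (s k) (s l)) • outer (r k) (r l) := by
      rw [hA, hB, Finset.sum_mul]
      refine Finset.sum_congr rfl fun k _ => ?_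
      rw [Finset.mul_sum]
      refine Finset.sum_congr rfl fun l _ => ?_
      rw [Matrix.smul_mul, Matrix.mul_smul, outer_mul_outer, smul_smul, smul_smul]
    have scal : ∀ k l, (Complex.I / (w - z k)) * (Complex.I / (w - starRingEnd ℂ (z l)))
        * inn (s k) (s l)
        = (Complex.I / (w - z k)) * (Complex.I * inn (s k) (s l) / (z k - starRingEnd ℂ (z l)))
          - (Complex.I / (w - starRingEnd ℂ (z l))) *
            (Complex.I * inn (s k) (s l) / (z k - starRingEnd ℂ (z l))) := by
      intro k l
      field_simp [hwz k, hwzc l, hconj k l]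
      ring_nf
    rw [step1]
    have split : ∀ k l, ((Complex.I / (w - z k)) * (Complex.I / (w - starRingEnd ℂ (z l)))
        * inn (s k) (s l)) • outer (r k) (r l)
        = (Complex.I / (w - z k)) •
            ((Complex.I * inn (s k) (s l) / (z k - starRingEnd ℂ (z l))) • outer (r k) (r l))
          - (Complex.I / (w - starRingEnd ℂ (z l))) •
            ((Complex.I * inn (s k) (s l) / (z k - starRingEnd ℂ (z l))) • outer (r k) (r l)) := by
      intro k l
      rw [smul_smul, smul_smul, ← sub_smul, ← scal k l]
    calc ∑ k, ∑ l, ((Complex.I / (w - z k)) * (Complex.I / (w - starRingEnd ℂ (z l)))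
          * inn (s k) (s l)) • outer (r k) (r l)
        = (∑ k, ∑ l, (Complex.I / (w - z k)) •
            ((Complex.I * inn (s k) (s l) / (z k - starRingEnd ℂ (z l))) • outer (r k) (r l)))
          - ∑ k, ∑ l, (Complex.I / (w - starRingEnd ℂ (z l))) •
            ((Complex.I * inn (s k) (s l) / (z k - starRingEnd ℂ (z l))) • outer (r k) (r l)) := by
          rw [← Finset.sum_sub_distrib]
          refine Finset.sum_congr rfl fun k _ => ?_
          rw [← Finset.sum_sub_distrib]
          exact Finset.sum_congr rfl fun l _ => split k l
      _ = A - B := by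
          congr 1
          · rw [hA]
            refine Finset.sum_congr rfl fun k _ => ?_
            rw [← Finset.smul_sum, key1 k]
          · rw [hB, Finset.sum_comm]
            refine Finset.sum_congr rfl fun l _ => ?_
            rw [← Finset.smul_sum, key2 l]
  rw [mul_sub, mul_one, add_mul, one_mul, hAB]
  abel
end
end

section
/- Let n ≥ 1, let z₁,…,z_n ∈ ℂ be distinct with Im z_k > 0 for each k, and let s₁,…,s_n ∈ ℂ² be such that the Gramian matrix M is invertible. If r₁,…,r_n ∈ ℂ² satisfy the linear system (L1), then they also satisfy the linear system (L2): i·r_k = Σ_{j=1}^n (⟨r_j,r_k⟩/(conj(z_j) − z_k))·s_j for each k = 1,…,n. -/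
open MeasureTheory Matrix ENNReal Filter

noncomputable section

/-- If the Gramian is invertible and (L1) holds, then (L2) holds. -/
theorem stmt_2 (n : ℕ) (hn : 1 ≤ n) (z : Fin n → ℂ) (hz : Function.Injective z)
    (him : ∀ k, 0 < (z k).im) (s : Fin n → Fin 2 → ℂ)
    (hM : IsUnit (gram z s)) (r : Fin n → Fin 2 → ℂ) (hr : L1sys z s r) :
    L2sys z s r := by
  classical
  set M := gram z s with hMdef
  have hd : IsUnit M.det := (Matrix.isUnit_iff_isUnit_det M).mp hM
  have hne1 : ∀ k j, starRingEnd ℂ (z k) - z j ≠ 0 := by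
    intro k j h
    have h2 : ((starRingEnd ℂ (z k)) - z j).im = 0 := by rw [h]; simp
    simp only [Complex.sub_im, Complex.conj_im] at h2
    nlinarith [him k, him j]
  have hinn : ∀ u v : Fin 2 → ℂ, starRingEnd ℂ (inn u v) = inn v u := by
    intro u v
    simp only [inn, map_add, _root_.map_mul, Complex.conj_conj]
    ring
  have hne1' : ∀ k j, z k - starRingEnd ℂ (z j) ≠ 0 := by
    intro k j h
    exact hne1 k j (by
      have h3 := congrArg (starRingEnd ℂ) h
      simpa [map_sub, Complex.conj_conj] using h3)
  have hherm : ∀ k j, starRingEnd ℂ (M k j) = M j k := by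
    intro k j
    have e1 : starRingEnd ℂ (M k j)
        = Complex.I * inn (s k) (s j) / (z k - starRingEnd ℂ (z j)) := by
      simp only [hMdef, _root_.gram, Matrix.of_apply, map_div₀, _root_.map_mul, map_neg, map_sub,
        Complex.conj_conj, Complex.conj_I, hinn]
      ring
    rw [e1]
    show _ = -Complex.I * inn (s k) (s j) / (starRingEnd ℂ (z j) - z k)
    rw [div_eq_div_iff (hne1' k j) (hne1 j k)]
    ring
  -- L1 componentwise
  have hS : ∀ (a : Fin 2) (k : Fin n), s k a = ∑ j, M k j * r j a := by
    intro a k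
    have h := congrFun (hr k) a
    simp only [Pi.smul_apply, smul_eq_mul, Finset.sum_apply] at h
    apply mul_left_cancel₀ Complex.I_ne_zero
    rw [h]
    rw [Finset.mul_sum]
    refine Finset.sum_congr rfl fun j _ => ?_
    have hM' : M k j = -Complex.I * inn (s j) (s k) / (starRingEnd ℂ (z k) - z j) := rfl
    rw [hM']
    field_simp [hne1 k j]
    linear_combination inn (s j) (s k) * r j a * Complex.I_sq
  have hconjS : ∀ (a : Fin 2) (j : Fin n),
      starRingEnd ℂ (s j a) = ∑ c, M c j * starRingEnd ℂ (r c a) := by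
    intro a j
    rw [hS a j, map_sum]
    refine Finset.sum_congr rfl fun c _ => ?_
    rw [_root_.map_mul, hherm]
  set C : Matrix (Fin n) (Fin n) ℂ := Matrix.of fun k j => inn (r j) (r k) with hCdef
  have hB : ∀ k j, inn (s j) (s k) = (M * C * M) k j := by
    intro k j
    have hrhs : (M * C * M) k j = ∑ c, ∑ b, M k b * C b c * M c j := by
      rw [Matrix.mul_apply]
      refine Finset.sum_congr rfl fun c _ => ?_
      rw [Matrix.mul_apply, Finset.sum_mul]
    rw [hrhs]
    have hlhs : inn (s j) (s k) =
        ∑ c, ∑ b, ((M c j * starRingEnd ℂ (r c 0)) * (M k b * r b 0)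
          + (M c j * starRingEnd ℂ (r c 1)) * (M k b * r b 1)) := by
      simp only [inn]
      rw [hconjS 0 j, hconjS 1 j, hS 0 k, hS 1 k]
      rw [Finset.sum_mul_sum, Finset.sum_mul_sum, ← Finset.sum_add_distrib]
      refine Finset.sum_congr rfl fun c _ => ?_
      rw [← Finset.sum_add_distrib]
    rw [hlhs]
    refine Finset.sum_congr rfl fun c _ => Finset.sum_congr rfl fun b _ => ?_
    simp only [hCdef, Matrix.of_apply, inn]
    ring
  have hdisp : Matrix.diagonal (fun k => starRingEnd ℂ (z k)) * M
      - M * Matrix.diagonal z = (-Complex.I) • (M * C * M) := by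
    ext k j
    simp only [Matrix.sub_apply, Matrix.diagonal_mul, Matrix.mul_diagonal,
      Matrix.smul_apply, smul_eq_mul]
    rw [← hB k j]
    have hM' : M k j = -Complex.I * inn (s j) (s k) / (starRingEnd ℂ (z k) - z j) := rfl
    rw [hM']
    field_simp [hne1 k j]
    ring
  have hinvM : M⁻¹ * M = 1 := Matrix.nonsing_inv_mul M hd
  have hMinv : M * M⁻¹ = 1 := Matrix.mul_nonsing_inv M hd
  have hNdisp : M⁻¹ * Matrix.diagonal (fun k => starRingEnd ℂ (z k))
      - Matrix.diagonal z * M⁻¹ = (-Complex.I) • C := by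
    have h1 : M⁻¹ * (Matrix.diagonal (fun k => starRingEnd ℂ (z k)) * M
        - M * Matrix.diagonal z) * M⁻¹ = (-Complex.I) • C := by
      rw [hdisp]
      rw [Matrix.mul_smul, Matrix.smul_mul]
      congr 1
      calc M⁻¹ * (M * C * M) * M⁻¹ = (M⁻¹ * M) * C * (M * M⁻¹) := by
            noncomm_ring
        _ = C := by rw [hinvM, hMinv, Matrix.one_mul, Matrix.mul_one]
    calc M⁻¹ * Matrix.diagonal (fun k => starRingEnd ℂ (z k)) - Matrix.diagonal z * M⁻¹
        = M⁻¹ * (Matrix.diagonal (fun k => starRingEnd ℂ (z k)) * M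
          - M * Matrix.diagonal z) * M⁻¹ := by
          rw [Matrix.mul_sub, Matrix.sub_mul, ← Matrix.mul_assoc, ← Matrix.mul_assoc,
            Matrix.mul_assoc (M⁻¹ * Matrix.diagonal fun k => starRingEnd ℂ (z k)) M M⁻¹,
            hMinv, hinvM, Matrix.mul_one, Matrix.one_mul]
      _ = (-Complex.I) • C := h1
  have hNentry : ∀ k j, M⁻¹ k j * (starRingEnd ℂ (z j) - z k)
      = -Complex.I * inn (r j) (r k) := by
    intro k j
    have h := congrFun (congrFun hNdisp k) j
    simp only [Matrix.sub_apply, Matrix.mul_diagonal, Matrix.diagonal_mul,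
      Matrix.smul_apply, smul_eq_mul, hCdef, Matrix.of_apply] at h
    rw [mul_sub]
    rw [← h]
    ring
  have hra : ∀ (a : Fin 2) (k : Fin n), r k a = ∑ j, M⁻¹ k j * s j a := by
    intro a k
    have h1 : (fun j => s j a) = M.mulVec (fun j => r j a) := by
      funext k'
      rw [Matrix.mulVec, dotProduct]
      exact hS a k'
    have h2 : M⁻¹.mulVec (fun j => s j a) = (fun j => r j a) := by
      rw [h1, Matrix.mulVec_mulVec, hinvM, Matrix.one_mulVec]
    have h3 := congrFun h2 k
    rw [← h3]
    rfl
  intro k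
  funext a
  simp only [Pi.smul_apply, smul_eq_mul, Finset.sum_apply]
  have key : ∀ j, inn (r j) (r k) / (starRingEnd ℂ (z j) - z k) = Complex.I * M⁻¹ k j := by
    intro j
    have h := hNentry k j
    have hne : starRingEnd ℂ (z j) - z k ≠ 0 := hne1 j k
    have h3 : Complex.I * (M⁻¹ k j * (starRingEnd ℂ (z j) - z k)) = inn (r j) (r k) := by
      rw [h]
      linear_combination (-(inn (r j) (r k))) * Complex.I_sq
    rw [div_eq_iff hne, mul_assoc]
    exact h3.symm
  calc Complex.I * r k a = Complex.I * ∑ j, M⁻¹ k j * s j a := by rw [← hra a k]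
    _ = ∑ j, Complex.I * M⁻¹ k j * s j a := by rw [Finset.mul_sum]; simp [mul_assoc]
    _ = ∑ j, (inn (r j) (r k) / (starRingEnd ℂ (z j) - z k)) * s j a := by
        refine Finset.sum_congr rfl fun j _ => ?_
        rw [key j]
end
end

section
/- Let q₀ : ℝ → ℂ be continuous and let z₁,…,z_n ∈ ℂ be distinct with Im z_k > 0. Suppose s₁,…,s_n : ℝ → ℂ² are differentiable and satisfy the Zakharov–Shabat system s_k′(x) = −i conj(z_k) σ₃ s_k(x) + Q(q₀(x)) s_k(x) for all x ∈ ℝ, and suppose the Gramian matrix M(x) of (z₁,…,z_n; s₁(x),…,s_n(x)) is invertible for every x ∈ ℝ. Let r_k(x) be the unique solution of the linear system (L1) at each x, and define q(x) := q₀(x) − (2/D(x)) Σ_{k=1}^n Σ_{j=1}^n D_{j,k}(x) s_{j,1}(x) conj(s_{k,2}(x)). Then each r_k is differentiable and satisfies r_k′(x) = −i z_k σ₃ r_k(x) + Q(q(x)) r_k(x) for all x ∈ ℝ. -/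
open MeasureTheory Matrix ENNReal Filter

noncomputable section

lemma Ux_mulVec (z w : ℂ) (v : Fin 2 → ℂ) (a : Fin 2) :
    (Ux z w).mulVec v a =
      ![-(Complex.I*z) * v 0 + w * v 1, -(starRingEnd ℂ w) * v 0 + Complex.I*z * v 1] a := by
  fin_cases a <;>
    simp [Ux, Qm, sigma3, Matrix.mulVec, dotProduct, Fin.sum_univ_two]

lemma det_diff {m : ℕ} (A : ℝ → Matrix (Fin m) (Fin m) ℂ) (x : ℝ)
    (h : ∀ i j, DifferentiableAt ℝ (fun x => A x i j) x) :
    DifferentiableAt ℝ (fun x => (A x).det) x := by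
  simp only [Matrix.det_apply']
  refine DifferentiableAt.fun_sum fun σ _ => DifferentiableAt.const_mul ?_ _
  exact DifferentiableAt.fun_finsetProd fun i _ => h _ _

lemma inv_entry_diff {m : ℕ} (A : ℝ → Matrix (Fin m) (Fin m) ℂ) (x : ℝ)
    (h : ∀ i j, DifferentiableAt ℝ (fun x => A x i j) x)
    (hd : (A x).det ≠ 0) (k j : Fin m) :
    DifferentiableAt ℝ (fun x => (A x)⁻¹ k j) x := by
  simp only [Matrix.inv_def, Matrix.smul_apply, Matrix.adjugate_apply, smul_eq_mul,
    Ring.inverse_eq_inv]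
  refine DifferentiableAt.mul (DifferentiableAt.inv (det_diff A x h) hd) ?_
  refine det_diff _ x fun i j' => ?_
  rcases eq_or_ne i j with rfl | hij
  · simp only [Matrix.updateRow_self]
    exact differentiableAt_const _
  · simp only [Matrix.updateRow_ne hij]
    exact h _ _

lemma gram_entry_hasDeriv (zj zk w : ℂ) (u v : ℝ → Fin 2 → ℂ) (x : ℝ)
    (hu : ∀ a, HasDerivAt (fun t => u t a) ((Ux (starRingEnd ℂ zj) w).mulVec (u x) a) x)
    (hv : ∀ a, HasDerivAt (fun t => v t a) ((Ux (starRingEnd ℂ zk) w).mulVec (v x) a) x)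
    (hd : starRingEnd ℂ zk - zj ≠ 0) :
    HasDerivAt (fun t => -Complex.I * inn (u t) (v t) / (starRingEnd ℂ zk - zj))
      (-(starRingEnd ℂ (u x 0) * v x 0 - starRingEnd ℂ (u x 1) * v x 1)) x := by
  have h : HasDerivAt (fun t => inn (u t) (v t))
      (starRingEnd ℂ ((Ux (starRingEnd ℂ zj) w).mulVec (u x) 0) * v x 0
        + starRingEnd ℂ (u x 0) * (Ux (starRingEnd ℂ zk) w).mulVec (v x) 0
        + (starRingEnd ℂ ((Ux (starRingEnd ℂ zj) w).mulVec (u x) 1) * v x 1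
        + starRingEnd ℂ (u x 1) * (Ux (starRingEnd ℂ zk) w).mulVec (v x) 1)) x := by
    simp only [inn, starRingEnd_apply]
    exact (((hu 0).star.mul (hv 0)).add ((hu 1).star.mul (hv 1)))
  have h2 := (h.const_mul (-Complex.I)).div_const (starRingEnd ℂ zk - zj)
  convert h2 using 1
  · rfl
  simp only [Ux_mulVec, Matrix.cons_val_zero, Matrix.cons_val_one, Matrix.head_cons,
    map_add, _root_.map_mul, map_neg, Complex.conj_I, Complex.conj_conj]
  field_simp
  linear_combination ((starRingEnd ℂ (u x 1) * v x 1 - starRingEnd ℂ (u x 0) * v x 0) *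
    (starRingEnd ℂ zk - zj)) * Complex.I_sq

lemma gram_herm_entry {n : ℕ} (z : Fin n → ℂ)
    (hne : ∀ k j, starRingEnd ℂ (z k) - z j ≠ 0) (s : Fin n → Fin 2 → ℂ) (k j : Fin n) :
    starRingEnd ℂ (gram z s j k) = gram z s k j := by
  have h1 : z j - starRingEnd ℂ (z k) ≠ 0 := by
    intro h; exact hne k j (by rw [← neg_sub] at h; simpa using neg_eq_zero.1 h)
  simp only [_root_.gram, Matrix.of_apply, map_div₀, _root_.map_mul, map_neg, map_sub,
    Complex.conj_I, Complex.conj_conj, inn_conj]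
  rw [div_eq_div_iff h1 (hne k j)]
  ring

lemma gram_isHermitian {n : ℕ} (z : Fin n → ℂ)
    (hne : ∀ k j, starRingEnd ℂ (z k) - z j ≠ 0) (s : Fin n → Fin 2 → ℂ) :
    (gram z s).IsHermitian := by
  refine Matrix.ext fun k j => ?_
  rw [Matrix.conjTranspose_apply, ← starRingEnd_apply]
  exact gram_herm_entry z hne s k j

/-- If `s_k` solve the ZS system with potential `q₀` and `r_k` solve (L1), then `r_k` solve
the ZS system with the dressed potential `q`. -/
theorem stmt_5 (n : ℕ) (hn : 1 ≤ n) (q₀ : ℝ → ℂ) (hq₀ : Continuous q₀)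
    (z : Fin n → ℂ) (hz : Function.Injective z) (him : ∀ k, 0 < (z k).im)
    (s : Fin n → ℝ → Fin 2 → ℂ)
    (hs : ∀ k x, HasDerivAt (s k) ((Ux (starRingEnd ℂ (z k)) (q₀ x)).mulVec (s k x)) x)
    (hM : ∀ x, IsUnit (gram z fun k => s k x))
    (r : Fin n → ℝ → Fin 2 → ℂ)
    (hr : ∀ x, L1sys z (fun k => s k x) fun k => r k x)
    (q : ℝ → ℂ) (hq : ∀ x, q x = dressQ z (q₀ x) fun k => s k x) :
    ∀ k x, HasDerivAt (r k) ((Ux (z k) (q x)).mulVec (r k x)) x := by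
  classical
  have hne : ∀ k j, starRingEnd ℂ (z k) - z j ≠ 0 := by
    intro k j h
    have h' := congrArg Complex.im h
    simp only [Complex.sub_im, Complex.conj_im, Complex.zero_im] at h'
    have h1 := him k; have h2 := him j; linarith
  intro k₀ x₀
  set M : ℝ → Matrix (Fin n) (Fin n) ℂ := fun x => gram z (fun k => s k x) with hMdef
  have hdet : ∀ x, IsUnit (M x).det := fun x => (Matrix.isUnit_iff_isUnit_det _).1 (hM x)
  have hdet' : ∀ x, (M x).det ≠ 0 := fun x => (hdet x).ne_zero
  set N : ℝ → Matrix (Fin n) (Fin n) ℂ := fun x => (M x)⁻¹ with hNdef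
  have hNM : ∀ x, N x * M x = 1 := fun x => Matrix.nonsing_inv_mul _ (hdet x)
  have hsc : ∀ (k : Fin n) (x : ℝ) (a : Fin 2), HasDerivAt (fun t => s k t a)
      ((Ux (starRingEnd ℂ (z k)) (q₀ x)).mulVec (s k x) a) x :=
    fun k x a => (hasDerivAt_pi.1 (hs k x)) a
  have hMd : ∀ (x : ℝ) (k j : Fin n), HasDerivAt (fun t => M t k j)
      (-(starRingEnd ℂ (s j x 0) * s k x 0 - starRingEnd ℂ (s j x 1) * s k x 1)) x := by
    intro x k j
    exact gram_entry_hasDeriv (z j) (z k) (q₀ x) (s j) (s k) x (hsc j x) (hsc k x) (hne k j)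
  have hMdiff : ∀ (x : ℝ) (k j : Fin n), DifferentiableAt ℝ (fun t => M t k j) x :=
    fun x k j => (hMd x k j).differentiableAt
  have hNdiff : ∀ (x : ℝ) (k j : Fin n), DifferentiableAt ℝ (fun t => N t k j) x :=
    fun x k j => inv_entry_diff M x (fun i j => hMdiff x i j) (hdet' x) k j
  have hherm : ∀ x, (M x).IsHermitian := fun x => gram_isHermitian z hne _
  have hNherm : ∀ (x : ℝ) (k j : Fin n), starRingEnd ℂ (N x k j) = N x j k := by
    intro x k j
    have h := ((hherm x).inv).apply j k
    rw [starRingEnd_apply]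
    exact h
  have hsr : ∀ (x : ℝ) (k : Fin n) (a : Fin 2), s k x a = ∑ j, M x k j * r j x a := by
    intro x k a
    have h := congrFun (hr x k) a
    simp only [Pi.smul_apply, Finset.sum_apply, smul_eq_mul] at h
    have h2 : s k x a = -Complex.I * (Complex.I * s k x a) := by
      rw [← mul_assoc, neg_mul, Complex.I_mul_I, neg_neg, one_mul]
    rw [h2, h, Finset.mul_sum]
    refine Finset.sum_congr rfl fun j _ => ?_
    have hMe : M x k j = -Complex.I * inn (s j x) (s k x) / (starRingEnd ℂ (z k) - z j) := rfl
    rw [hMe]; ring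
  have hrN : ∀ (x : ℝ) (k : Fin n) (a : Fin 2), r k x a = ∑ l, N x k l * s l x a := by
    intro x k a
    have hvec : (fun k => s k x a) = (M x).mulVec (fun j => r j x a) := by
      funext k'
      rw [hsr x k' a]; rfl
    have h2 : (N x).mulVec (fun k => s k x a) = fun j => r j x a := by
      rw [hvec, Matrix.mulVec_mulVec, hNM x, Matrix.one_mulVec]
    have h3 := congrFun h2 k
    rw [← h3]; rfl
  have hqx : q x₀ = q₀ x₀
      - 2 * ∑ k, ∑ j, N x₀ k j * s j x₀ 0 * starRingEnd ℂ (s k x₀ 1) := by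
    rw [hq x₀]
    simp only [dressQ, cof]
    have hadj : ∀ k j : Fin n, N x₀ k j
        = ((M x₀).det)⁻¹ * (gram z fun k => s k x₀).adjugate k j := by
      intro k j
      show (M x₀)⁻¹ k j = _
      rw [Matrix.inv_def]
      simp [Ring.inverse_eq_inv]
      left; rfl
    have hsum : ∑ k, ∑ j, N x₀ k j * s j x₀ 0 * starRingEnd ℂ (s k x₀ 1)
        = ((M x₀).det)⁻¹ * ∑ k, ∑ j,
            (gram z fun k => s k x₀).adjugate k j * s j x₀ 0 * starRingEnd ℂ (s k x₀ 1) := by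
      rw [Finset.mul_sum]
      refine Finset.sum_congr rfl fun k _ => ?_
      rw [Finset.mul_sum]
      refine Finset.sum_congr rfl fun j _ => ?_
      rw [hadj k j]; ring
    rw [hsum]
    have hdd : (gram z fun k => s k x₀).det = (M x₀).det := rfl
    rw [hdd]
    ring
  have hrdiff : ∀ (j : Fin n) (a : Fin 2), DifferentiableAt ℝ (fun t => r j t a) x₀ := by
    intro j a
    have hfun : (fun t => r j t a) = fun t => ∑ l, N t j l * s l t a :=
      funext fun t => hrN t j a
    rw [hfun]
    exact DifferentiableAt.fun_sum fun l _ => (hNdiff x₀ j l).mul (hsc l x₀ a).differentiableAt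
  set v : Fin n → Fin 2 → ℂ := fun j a => deriv (fun t => r j t a) x₀ with hvdef
  have hv : ∀ (j : Fin n) (a : Fin 2), HasDerivAt (fun t => r j t a) (v j a) x₀ :=
    fun j a => (hrdiff j a).hasDerivAt
  have hcon : ∀ (k : Fin n) (a : Fin 2),
      ∑ j, M x₀ k j * v j a = (Ux (starRingEnd ℂ (z k)) (q₀ x₀)).mulVec (s k x₀) a
        - ∑ j, (-(starRingEnd ℂ (s j x₀ 0) * s k x₀ 0
            - starRingEnd ℂ (s j x₀ 1) * s k x₀ 1)) * r j x₀ a := by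
    intro k a
    have h2 : HasDerivAt (fun t => s k t a)
        (∑ j, (-(starRingEnd ℂ (s j x₀ 0) * s k x₀ 0
            - starRingEnd ℂ (s j x₀ 1) * s k x₀ 1) * r j x₀ a + M x₀ k j * v j a)) x₀ := by
      have hfun : (fun t => s k t a) = fun t => ∑ j, M t k j * r j t a :=
        funext fun t => hsr t k a
      rw [hfun]
      exact HasDerivAt.fun_sum fun j _ => (hMd x₀ k j).mul (hv j a)
    have h3 := (hsc k x₀ a).unique h2
    rw [Finset.sum_add_distrib] at h3
    rw [h3]; ring
  have hP1 : ∀ k j : Fin n, M x₀ k j * z j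
      = starRingEnd ℂ (z k) * M x₀ k j + Complex.I * inn (s j x₀) (s k x₀) := by
    intro k j
    have hMe : M x₀ k j = -Complex.I * inn (s j x₀) (s k x₀) / (starRingEnd ℂ (z k) - z j) := rfl
    rw [hMe]
    field_simp [hne k j]
    ring
  have hP2 : ∀ (k : Fin n) (a : Fin 2), ∑ j, M x₀ k j * r j x₀ a = s k x₀ a :=
    fun k a => (hsr x₀ k a).symm
  have hP4 : ∑ j, starRingEnd ℂ (s j x₀ 1) * r j x₀ 0
      = ∑ k, ∑ j, N x₀ k j * s j x₀ 0 * starRingEnd ℂ (s k x₀ 1) := by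
    refine Finset.sum_congr rfl fun j _ => ?_
    rw [hrN x₀ j 0, Finset.mul_sum]
    refine Finset.sum_congr rfl fun l _ => ?_
    ring
  have hP5 : ∑ j, starRingEnd ℂ (s j x₀ 0) * r j x₀ 1
      = starRingEnd ℂ (∑ k, ∑ j, N x₀ k j * s j x₀ 0 * starRingEnd ℂ (s k x₀ 1)) := by
    have e1 : ∀ j : Fin n, starRingEnd ℂ (s j x₀ 0) * r j x₀ 1
        = ∑ l, starRingEnd ℂ (s j x₀ 0) * (N x₀ j l * s l x₀ 1) := by
      intro j; rw [hrN x₀ j 1, Finset.mul_sum]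
    rw [Finset.sum_congr rfl fun j _ => e1 j, Finset.sum_comm, map_sum]
    refine Finset.sum_congr rfl fun k _ => ?_
    rw [map_sum]
    refine Finset.sum_congr rfl fun j _ => ?_
    rw [_root_.map_mul, _root_.map_mul, Complex.conj_conj, hNherm x₀ k j]
    ring
  have hqc : starRingEnd ℂ (q x₀) = starRingEnd ℂ (q₀ x₀)
      - 2 * starRingEnd ℂ (∑ k, ∑ j, N x₀ k j * s j x₀ 0 * starRingEnd ℂ (s k x₀ 1)) := by
    rw [hqx, map_sub, _root_.map_mul, Complex.conj_ofNat]
  have hMW : ∀ (k : Fin n) (a : Fin 2),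
      ∑ j, M x₀ k j * ((Ux (z j) (q x₀)).mulVec (r j x₀) a) = ∑ j, M x₀ k j * v j a := by
    intro k a
    have key0 : ∑ j, M x₀ k j * ((Ux (z j) (q x₀)).mulVec (r j x₀) 0)
        = ∑ j, M x₀ k j * v j 0 := by
      rw [hcon k 0]
      have e1 : ∀ j : Fin n, M x₀ k j * ((Ux (z j) (q x₀)).mulVec (r j x₀) 0)
          = -(Complex.I * starRingEnd ℂ (z k)) * (M x₀ k j * r j x₀ 0)
            + q x₀ * (M x₀ k j * r j x₀ 1) + inn (s j x₀) (s k x₀) * r j x₀ 0 := by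
        intro j
        rw [Ux_mulVec]
        simp only [Matrix.cons_val_zero]
        linear_combination (-Complex.I * r j x₀ 0) * hP1 k j
          - (inn (s j x₀) (s k x₀) * r j x₀ 0) * Complex.I_sq
      rw [Finset.sum_congr rfl fun j _ => e1 j]
      rw [Finset.sum_add_distrib, Finset.sum_add_distrib, ← Finset.mul_sum, ← Finset.mul_sum,
        hP2 k 0, hP2 k 1]
      rw [Ux_mulVec]
      simp only [Matrix.cons_val_zero]
      have hsplit : ∑ j, inn (s j x₀) (s k x₀) * r j x₀ 0
          = ∑ j, (starRingEnd ℂ (s j x₀ 0) * s k x₀ 0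
              - starRingEnd ℂ (s j x₀ 1) * s k x₀ 1) * r j x₀ 0
            + 2 * s k x₀ 1 * ∑ j, starRingEnd ℂ (s j x₀ 1) * r j x₀ 0 := by
        rw [Finset.mul_sum, ← Finset.sum_add_distrib]
        refine Finset.sum_congr rfl fun j _ => ?_
        simp only [inn]; ring
      have hneg : ∑ j, (-(starRingEnd ℂ (s j x₀ 0) * s k x₀ 0
            - starRingEnd ℂ (s j x₀ 1) * s k x₀ 1)) * r j x₀ 0
          = -∑ j, (starRingEnd ℂ (s j x₀ 0) * s k x₀ 0
            - starRingEnd ℂ (s j x₀ 1) * s k x₀ 1) * r j x₀ 0 := by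
        rw [← Finset.sum_neg_distrib]
        exact Finset.sum_congr rfl fun j _ => by ring
      rw [hsplit, hP4, hneg, hqx]
      ring
    have key1 : ∑ j, M x₀ k j * ((Ux (z j) (q x₀)).mulVec (r j x₀) 1)
        = ∑ j, M x₀ k j * v j 1 := by
      rw [hcon k 1]
      have e1 : ∀ j : Fin n, M x₀ k j * ((Ux (z j) (q x₀)).mulVec (r j x₀) 1)
          = Complex.I * starRingEnd ℂ (z k) * (M x₀ k j * r j x₀ 1)
            - starRingEnd ℂ (q x₀) * (M x₀ k j * r j x₀ 0)
            - inn (s j x₀) (s k x₀) * r j x₀ 1 := by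
        intro j
        rw [Ux_mulVec]
        simp only [Matrix.cons_val_one, Matrix.head_cons, Matrix.cons_val_zero]
        linear_combination (Complex.I * r j x₀ 1) * hP1 k j
          + (inn (s j x₀) (s k x₀) * r j x₀ 1) * Complex.I_sq
      rw [Finset.sum_congr rfl fun j _ => e1 j]
      rw [Finset.sum_sub_distrib, Finset.sum_sub_distrib, ← Finset.mul_sum, ← Finset.mul_sum,
        hP2 k 0, hP2 k 1]
      rw [Ux_mulVec]
      simp only [Matrix.cons_val_one, Matrix.head_cons, Matrix.cons_val_zero]
      have hsplit : ∑ j, inn (s j x₀) (s k x₀) * r j x₀ 1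
          = -∑ j, (starRingEnd ℂ (s j x₀ 0) * s k x₀ 0
              - starRingEnd ℂ (s j x₀ 1) * s k x₀ 1) * r j x₀ 1
            + 2 * s k x₀ 0 * ∑ j, starRingEnd ℂ (s j x₀ 0) * r j x₀ 1 := by
        rw [Finset.mul_sum, ← Finset.sum_neg_distrib, ← Finset.sum_add_distrib]
        refine Finset.sum_congr rfl fun j _ => ?_
        simp only [inn]; ring
      have hneg : ∑ j, (-(starRingEnd ℂ (s j x₀ 0) * s k x₀ 0
            - starRingEnd ℂ (s j x₀ 1) * s k x₀ 1)) * r j x₀ 1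
          = -∑ j, (starRingEnd ℂ (s j x₀ 0) * s k x₀ 0
            - starRingEnd ℂ (s j x₀ 1) * s k x₀ 1) * r j x₀ 1 := by
        rw [← Finset.sum_neg_distrib]
        exact Finset.sum_congr rfl fun j _ => by ring
      rw [hsplit, hP5, hneg, hqc]
      ring
    fin_cases a
    · exact key0
    · exact key1
  have hveq : ∀ (j : Fin n) (a : Fin 2), v j a = (Ux (z j) (q x₀)).mulVec (r j x₀) a := by
    intro j a
    have hvec : (M x₀).mulVec (fun j => (Ux (z j) (q x₀)).mulVec (r j x₀) a)
        = (M x₀).mulVec (fun j => v j a) := by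
      funext k
      exact hMW k a
    have h2 := congrArg (fun w => (N x₀).mulVec w) hvec
    simp only [Matrix.mulVec_mulVec, hNM x₀, Matrix.one_mulVec] at h2
    exact (congrFun h2 j).symm
  refine hasDerivAt_pi.2 fun a => ?_
  rw [show (Ux (z k₀) (q x₀)).mulVec (r k₀ x₀) a = v k₀ a from (hveq k₀ a).symm]
  exact hv k₀ a
end
end

section
/- Let n ≥ 1, let z₁,…,z_n ∈ ℂ be distinct with Im z_k > 0 for each k, let s₁,…,s_n ∈ ℂ² be such that the Gramian matrix M is invertible, and let r₁,…,r_n be the unique solution of the linear system (L1). Then Σ_{k=1}^n ( ⟨s_k, r_k⟩ + ⟨r_k, s_k⟩ ) = 2i Σ_{k=1}^n (conj(z_k) − z_k) = 4 Σ_{k=1}^n Im z_k. -/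
open MeasureTheory Matrix ENNReal Filter

noncomputable section

/-- The trace identity `∑_k (⟨s_k, r_k⟩ + ⟨r_k, s_k⟩) = 2i ∑_k (conj z_k - z_k) = 4 ∑_k Im z_k`. -/
theorem stmt_7 (n : ℕ) (hn : 1 ≤ n) (z : Fin n → ℂ) (hz : Function.Injective z)
    (him : ∀ k, 0 < (z k).im) (s : Fin n → Fin 2 → ℂ) (hM : IsUnit (gram z s))
    (r : Fin n → Fin 2 → ℂ) (hr : L1sys z s r) :
    ∑ k, (inn (s k) (r k) + inn (r k) (s k)) =
        2 * Complex.I * ∑ k, (starRingEnd ℂ (z k) - z k) ∧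
      ∑ k, (inn (s k) (r k) + inn (r k) (s k)) = 4 * ∑ k, ((z k).im : ℂ) := by
  classical
  set M : Matrix (Fin n) (Fin n) ℂ := gram z s with hMdef
  set S : Matrix (Fin n) (Fin 2) ℂ := Matrix.of (fun k a => s k a) with hSdef
  set R : Matrix (Fin n) (Fin 2) ℂ := Matrix.of (fun k a => r k a) with hRdef
  have hdenom : ∀ k j : Fin n, starRingEnd ℂ (z k) - z j ≠ 0 := by
    intro k j h
    have h' : (starRingEnd ℂ (z k) - z j).im = 0 := by rw [h]; simp
    simp only [Complex.sub_im, Complex.conj_im] at h'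
    nlinarith [him k, him j]
  -- S = M * R
  have hSR : S = M * R := by
    ext k a
    have hk := congrFun (hr k) a
    simp only [Pi.smul_apply, Finset.sum_apply, smul_eq_mul] at hk
    have hkey : s k a = ∑ j, (-Complex.I * inn (s j) (s k) / (starRingEnd ℂ (z k) - z j)) * r j a := by
      calc s k a = -Complex.I * (Complex.I * s k a) := by
            rw [← mul_assoc, neg_mul, Complex.I_mul_I, neg_neg, one_mul]
        _ = -Complex.I * ∑ j, inn (s j) (s k) / (starRingEnd ℂ (z k) - z j) * r j a := by
            rw [hk]
        _ = ∑ j, (-Complex.I * inn (s j) (s k) / (starRingEnd ℂ (z k) - z j)) * r j a := by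
            rw [Finset.mul_sum]; apply Finset.sum_congr rfl; intro j _; ring
    simpa [Matrix.mul_apply, hMdef, _root_.gram, hSdef, hRdef] using hkey
  -- M is Hermitian
  have hherm : Mᴴ = M := by
    ext k j
    show starRingEnd ℂ (M j k) = M k j
    simp only [hMdef, _root_.gram, Matrix.of_apply]
    rw [map_div₀, _root_.map_mul, map_neg, Complex.conj_I]
    have h1 : starRingEnd ℂ (inn (s k) (s j)) = inn (s j) (s k) := by
      simp [inn]; ring
    have h2 : starRingEnd ℂ (starRingEnd ℂ (z j) - z k) = -(starRingEnd ℂ (z k) - z j) := by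
      rw [map_sub, Complex.conj_conj]; ring
    rw [h1, h2, div_neg]
    ring
  -- key identity
  have hkey : Matrix.diagonal (fun k => starRingEnd ℂ (z k)) * M - M * Matrix.diagonal z
      = (-Complex.I) • (S * Sᴴ) := by
    ext k j
    rw [Matrix.sub_apply, Matrix.diagonal_mul, Matrix.mul_diagonal, Matrix.smul_apply,
      Matrix.mul_apply]
    simp only [Matrix.conjTranspose_apply, hMdef, _root_.gram, Matrix.of_apply, hSdef, smul_eq_mul]
    have hs : ∑ a : Fin 2, s k a * star (s j a) = inn (s j) (s k) := by
      simp [inn, Fin.sum_univ_two, RCLike.star_def]; ring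
    rw [hs]
    field_simp [hdenom k j]
    ring
  have hdet : IsUnit M.det := (Matrix.isUnit_iff_isUnit_det M).mp hM
  have hinv1 : M⁻¹ * M = 1 := Matrix.nonsing_inv_mul M hdet
  have hinv2 : M * M⁻¹ = 1 := Matrix.mul_nonsing_inv M hdet
  -- trace of M⁻¹ * key
  have hA : (M⁻¹ * (Matrix.diagonal (fun k => starRingEnd ℂ (z k)) * M)).trace
      = ∑ k, starRingEnd ℂ (z k) := by
    rw [Matrix.trace_mul_comm, Matrix.mul_assoc, hinv2, Matrix.mul_one, Matrix.trace_diagonal]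
  have hB : (M⁻¹ * (M * Matrix.diagonal z)).trace = ∑ k, z k := by
    rw [← Matrix.mul_assoc, hinv1, Matrix.one_mul, Matrix.trace_diagonal]
  have htr1 : (M⁻¹ * (Matrix.diagonal (fun k => starRingEnd ℂ (z k)) * M
        - M * Matrix.diagonal z)).trace
      = ∑ k, (starRingEnd ℂ (z k) - z k) := by
    rw [Matrix.mul_sub, Matrix.trace_sub, hA, hB, ← Finset.sum_sub_distrib]
  have hSH : Sᴴ = Rᴴ * M := by rw [hSR, Matrix.conjTranspose_mul, hherm]
  have htr2 : (M⁻¹ * ((-Complex.I) • (S * Sᴴ))).trace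
      = -Complex.I * (R * Rᴴ * M).trace := by
    rw [Matrix.mul_smul, Matrix.trace_smul, smul_eq_mul]
    congr 2
    rw [hSH, hSR]
    simp only [← Matrix.mul_assoc]
    rw [hinv1, Matrix.one_mul]
  have hT : -Complex.I * (R * Rᴴ * M).trace = ∑ k, (starRingEnd ℂ (z k) - z k) := by
    rw [← htr2, ← hkey, htr1]
  -- the goal sum equals 2 * trace(R * Rᴴ * M)
  have hsum : ∑ k, (inn (s k) (r k) + inn (r k) (s k)) = 2 * (R * Rᴴ * M).trace := by
    have e1 : ∑ k, inn (r k) (s k) = (Rᴴ * S).trace := by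
      simp only [Matrix.trace, Matrix.diag, Matrix.mul_apply, Matrix.conjTranspose_apply,
        Matrix.of_apply, hSdef, hRdef, Fin.sum_univ_two, ← Finset.sum_add_distrib]
      refine Finset.sum_congr rfl fun k _ => ?_
      simp [inn, RCLike.star_def]
    have e2 : ∑ k, inn (s k) (r k) = (Sᴴ * R).trace := by
      simp only [Matrix.trace, Matrix.diag, Matrix.mul_apply, Matrix.conjTranspose_apply,
        Matrix.of_apply, hSdef, hRdef, Fin.sum_univ_two, ← Finset.sum_add_distrib]
      refine Finset.sum_congr rfl fun k _ => ?_
      simp [inn, RCLike.star_def]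
    have e3 : (Rᴴ * S).trace = (R * Rᴴ * M).trace := by
      rw [hSR, ← Matrix.mul_assoc, Matrix.trace_mul_comm, ← Matrix.mul_assoc]
    have e4 : (Sᴴ * R).trace = (R * Rᴴ * M).trace := by
      rw [hSH, Matrix.trace_mul_comm, ← Matrix.mul_assoc]
    rw [Finset.sum_add_distrib, e1, e2, e3, e4]
    ring
  have hzim : ∑ k, (starRingEnd ℂ (z k) - z k) = -2 * Complex.I * ∑ k, ((z k).im : ℂ) := by
    rw [Finset.mul_sum]
    refine Finset.sum_congr rfl fun k _ => ?_
    have hc := Complex.sub_conj (z k)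
    rw [show starRingEnd ℂ (z k) - z k = -(z k - starRingEnd ℂ (z k)) by ring, hc]
    push_cast
    ring
  constructor
  · rw [hsum]
    linear_combination 2 * Complex.I * hT + 2 * (R * Rᴴ * M).trace * Complex.I_sq
  · rw [hsum]
    have h5 : -Complex.I * (R * Rᴴ * M).trace = -2 * Complex.I * ∑ k, ((z k).im : ℂ) :=
      hT.trans hzim
    linear_combination 2 * Complex.I * h5 +
      (2 * (R * Rᴴ * M).trace - 4 * ∑ k, ((z k).im : ℂ)) * Complex.I_sq
end
end

section
/- Let q₀ : ℝ → ℂ be continuous, let z₁,…,z_n ∈ ℂ have Im z_k > 0, and suppose s₁,…,s_n : ℝ → ℂ² are differentiable solutions of s_k′(x) = −i conj(z_k) σ₃ s_k(x) + Q(q₀(x)) s_k(x). Then each entry of the Gramian matrix M(x) of (z₁,…,z_n; s₁(x),…,s_n(x)) is differentiable in x with (d/dx) M_{k,j}(x) = −⟨s_j(x), σ₃ s_k(x)⟩ for all k, j and all x ∈ ℝ. -/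
open MeasureTheory Matrix ENNReal Filter

noncomputable section

/-- Differentiating the Gramian entries: `(d/dx) M_{k,j} = -⟨s_j, σ₃ s_k⟩`. -/
theorem stmt_8 (n : ℕ) (q₀ : ℝ → ℂ) (hq₀ : Continuous q₀)
    (z : Fin n → ℂ) (him : ∀ k, 0 < (z k).im)
    (s : Fin n → ℝ → Fin 2 → ℂ)
    (hs : ∀ k x, HasDerivAt (s k) ((Ux (starRingEnd ℂ (z k)) (q₀ x)).mulVec (s k x)) x) :
    ∀ k j x, HasDerivAt (fun y => gram z (fun m => s m y) k j)
      (-(inn (s j x) (sigma3.mulVec (s k x)))) x := by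
  intro k j x
  have hc : (starRingEnd ℂ (z k) - z j) ≠ 0 := by
    intro h
    have him' := congrArg Complex.im h
    simp [Complex.sub_im, Complex.conj_im] at him'
    have hk := him k; have hj := him j
    linarith
  have hcomp : ∀ m i, HasDerivAt (fun y => s m y i)
      (((Ux (starRingEnd ℂ (z m)) (q₀ x)).mulVec (s m x)) i) x := fun m i =>
    hasDerivAt_pi.mp (hs m x) i
  have h0j := hcomp j 0
  have h1j := hcomp j 1
  have h0k := hcomp k 0
  have h1k := hcomp k 1
  have hinn : HasDerivAt (fun y => inn (s j y) (s k y))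
      ((starRingEnd ℂ (((Ux (starRingEnd ℂ (z j)) (q₀ x)).mulVec (s j x)) 0) * s k x 0
        + starRingEnd ℂ (s j x 0) * ((Ux (starRingEnd ℂ (z k)) (q₀ x)).mulVec (s k x)) 0)
       + (starRingEnd ℂ (((Ux (starRingEnd ℂ (z j)) (q₀ x)).mulVec (s j x)) 1) * s k x 1
        + starRingEnd ℂ (s j x 1) * ((Ux (starRingEnd ℂ (z k)) (q₀ x)).mulVec (s k x)) 1)) x := by
    exact (h0j.star.mul h0k).add (h1j.star.mul h1k)
  have hg : HasDerivAt (fun y => gram z (fun m => s m y) k j)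
      ((-Complex.I * ((starRingEnd ℂ (((Ux (starRingEnd ℂ (z j)) (q₀ x)).mulVec (s j x)) 0) * s k x 0
        + starRingEnd ℂ (s j x 0) * ((Ux (starRingEnd ℂ (z k)) (q₀ x)).mulVec (s k x)) 0)
       + (starRingEnd ℂ (((Ux (starRingEnd ℂ (z j)) (q₀ x)).mulVec (s j x)) 1) * s k x 1
        + starRingEnd ℂ (s j x 1) * ((Ux (starRingEnd ℂ (z k)) (q₀ x)).mulVec (s k x)) 1)))
        / (starRingEnd ℂ (z k) - z j)) x := by
    simp only [_root_.gram, Matrix.of_apply]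
    exact (hinn.const_mul (-Complex.I)).div_const _
  convert hg using 1
  simp only [Ux, sigma3, Qm, Matrix.mulVec, Matrix.add_apply, Matrix.smul_apply,
    Matrix.cons_val', Matrix.cons_val_zero, Matrix.cons_val_one, Matrix.head_cons,
    Matrix.head_fin_const, Matrix.empty_val', Matrix.cons_val_fin_one, inn,
    dotProduct, Fin.sum_univ_two, smul_eq_mul, Matrix.of_apply]
  field_simp
  ring_nf
  simp only [map_add, map_neg, map_mul, map_sub, Complex.conj_I, Complex.conj_conj]
  ring_nf
  simp only [Complex.I_sq]
  ring
end
end
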